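/- arXiv:2510.09345 — 4 statements merged into one kernel-verified Lean document; each statement's English description precedes it below -/
import Mathlib

section
/- Let γ : I → 𝕃⁴ be a time-like curve parametrized by proper time. If γ admits a generalized Bishop frame of type F, then γ admits a generalized Bishop frame of type D. -/
open Set Real

noncomputable section

/-- The Minkowski form on `ℝ⁴ = 𝕃⁴`: `⟨x,y⟩ = -x₀y₀ + x₁y₁ + x₂y₂ + x₃y₃`. -/
def mink (x y : Fin 4 → ℝ) : ℝ :=
  -(x 0 * y 0) + x 1 * y 1 + x 2 * y 2 + x 3 * y 3

/-- `(T, Z₁, Z₂, Z₃)` is an orthonormal frame along a time-like curve with tangent `T`: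
the `Zᵢ` are smooth on `I`, pairwise orthonormal (space-like) and orthogonal to `T`. -/
def OrthFrame (I : Set ℝ) (T Z₁ Z₂ Z₃ : ℝ → Fin 4 → ℝ) : Prop :=
  ContDiffOn ℝ (⊤ : ℕ∞) Z₁ I ∧ ContDiffOn ℝ (⊤ : ℕ∞) Z₂ I ∧ ContDiffOn ℝ (⊤ : ℕ∞) Z₃ I ∧
  ∀ s ∈ I,
    mink (Z₁ s) (Z₁ s) = 1 ∧ mink (Z₂ s) (Z₂ s) = 1 ∧ mink (Z₃ s) (Z₃ s) = 1 ∧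
    mink (Z₁ s) (Z₂ s) = 0 ∧ mink (Z₁ s) (Z₃ s) = 0 ∧ mink (Z₂ s) (Z₃ s) = 0 ∧
    mink (T s) (Z₁ s) = 0 ∧ mink (T s) (Z₂ s) = 0 ∧ mink (T s) (Z₃ s) = 0

/-- `γ` is a smooth time-like curve parametrized by proper time on `I`. -/
def ProperTime (I : Set ℝ) (γ : ℝ → Fin 4 → ℝ) : Prop :=
  ContDiffOn ℝ (⊤ : ℕ∞) γ I ∧ ∀ s ∈ I, mink (deriv γ s) (deriv γ s) = -1

/-- Three smooth real functions on `I`. -/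
def Smooth3 (I : Set ℝ) (x₁ x₂ x₃ : ℝ → ℝ) : Prop :=
  ContDiffOn ℝ (⊤ : ℕ∞) x₁ I ∧ ContDiffOn ℝ (⊤ : ℕ∞) x₂ I ∧ ContDiffOn ℝ (⊤ : ℕ∞) x₃ I

/-- `γ` admits a generalized Bishop frame of type B. -/
def AdmitsB (I : Set ℝ) (γ : ℝ → Fin 4 → ℝ) : Prop :=
  ∃ (Z₁ Z₂ Z₃ : ℝ → Fin 4 → ℝ) (x₁ x₂ x₃ : ℝ → ℝ),
    OrthFrame I (deriv γ) Z₁ Z₂ Z₃ ∧ Smooth3 I x₁ x₂ x₃ ∧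
    ∀ s ∈ I,
      deriv (deriv γ) s = x₁ s • Z₁ s + x₂ s • Z₂ s + x₃ s • Z₃ s ∧
      deriv Z₁ s = x₁ s • deriv γ s ∧
      deriv Z₂ s = x₂ s • deriv γ s ∧
      deriv Z₃ s = x₃ s • deriv γ s

/-- `γ` admits a generalized Bishop frame of type C. -/
def AdmitsC (I : Set ℝ) (γ : ℝ → Fin 4 → ℝ) : Prop :=
  ∃ (Z₁ Z₂ Z₃ : ℝ → Fin 4 → ℝ) (x₁ x₂ x₃ : ℝ → ℝ),
    OrthFrame I (deriv γ) Z₁ Z₂ Z₃ ∧ Smooth3 I x₁ x₂ x₃ ∧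
    ∀ s ∈ I,
      deriv (deriv γ) s = x₁ s • Z₁ s + x₂ s • Z₂ s ∧
      deriv Z₁ s = x₁ s • deriv γ s + x₃ s • Z₃ s ∧
      deriv Z₂ s = x₂ s • deriv γ s ∧
      deriv Z₃ s = (-(x₃ s)) • Z₁ s

/-- `γ` admits a generalized Bishop frame of type D. -/
def AdmitsD (I : Set ℝ) (γ : ℝ → Fin 4 → ℝ) : Prop :=
  ∃ (Z₁ Z₂ Z₃ : ℝ → Fin 4 → ℝ) (x₁ x₂ x₃ : ℝ → ℝ),
    OrthFrame I (deriv γ) Z₁ Z₂ Z₃ ∧ Smooth3 I x₁ x₂ x₃ ∧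
    ∀ s ∈ I,
      deriv (deriv γ) s = x₁ s • Z₁ s ∧
      deriv Z₁ s = x₁ s • deriv γ s + x₂ s • Z₂ s + x₃ s • Z₃ s ∧
      deriv Z₂ s = (-(x₂ s)) • Z₁ s ∧
      deriv Z₃ s = (-(x₃ s)) • Z₁ s

/-- `γ` admits a generalized Bishop frame of type F. -/
def AdmitsF (I : Set ℝ) (γ : ℝ → Fin 4 → ℝ) : Prop :=
  ∃ (Z₁ Z₂ Z₃ : ℝ → Fin 4 → ℝ) (x₁ x₂ x₃ : ℝ → ℝ),
    OrthFrame I (deriv γ) Z₁ Z₂ Z₃ ∧ Smooth3 I x₁ x₂ x₃ ∧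
    ∀ s ∈ I,
      deriv (deriv γ) s = x₁ s • Z₁ s ∧
      deriv Z₁ s = x₁ s • deriv γ s + x₂ s • Z₂ s ∧
      deriv Z₂ s = (-(x₂ s)) • Z₁ s + x₃ s • Z₃ s ∧
      deriv Z₃ s = (-(x₃ s)) • Z₂ s

lemma mink_comm (x y : Fin 4 → ℝ) : mink x y = mink y x := by unfold mink; ring

lemma mink_bilin (a b c d : ℝ) (x y z w : Fin 4 → ℝ) :
    mink (a • x + b • y) (c • z + d • w) =
      a * c * mink x z + a * d * mink x w + b * c * mink y z + b * d * mink y w := by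
  simp only [mink, Pi.add_apply, Pi.smul_apply, smul_eq_mul]; ring

lemma mink_right (a b : ℝ) (x y z : Fin 4 → ℝ) :
    mink x (a • y + b • z) = a * mink x y + b * mink x z := by
  simp only [mink, Pi.add_apply, Pi.smul_apply, smul_eq_mul]; ring

/-- If a time-like curve parametrized by proper time admits a generalized
Bishop frame of type F, then it admits a generalized Bishop frame of type D. -/
theorem stmt_0 (I : Set ℝ) (hIopen : IsOpen I) (hIconn : I.OrdConnected)
    (γ : ℝ → Fin 4 → ℝ) (hγ : ProperTime I γ) (hF : AdmitsF I γ) :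
    AdmitsD I γ := by
  obtain ⟨Z₁, Z₂, Z₃, x₁, x₂, x₃, ⟨hsZ₁, hsZ₂, hsZ₃, horth⟩, ⟨hx₁, hx₂, hx₃⟩, heqs⟩ := hF
  rcases I.eq_empty_or_nonempty with hIe | ⟨a, ha⟩
  · refine ⟨Z₁, Z₂, Z₃, x₁, x₂, x₃, ⟨hsZ₁, hsZ₂, hsZ₃, fun s hs => horth s hs⟩,
      ⟨hx₁, hx₂, hx₃⟩, fun s hs => ?_⟩
    rw [hIe] at hs; exact absurd hs (Set.notMem_empty s)
  -- antiderivative of -x₃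
  set g : ℝ → ℝ := fun t => -x₃ t with hgdef
  have hg : ContDiffOn ℝ (⊤ : ℕ∞) g I := hx₃.neg
  have hgc : ContinuousOn g I := hg.continuousOn
  set θ : ℝ → ℝ := fun u => ∫ t in a..u, g t with hθdef
  have hθd : ∀ s ∈ I, HasDerivAt θ (g s) s := by
    intro s hs
    exact intervalIntegral.integral_hasDerivAt_right
      ((hgc.mono (hIconn.uIcc_subset ha hs)).intervalIntegrable)
      (hgc.stronglyMeasurableAtFilter hIopen s hs)
      (hgc.continuousAt (hIopen.mem_nhds hs))
  have hθsm : ContDiffOn ℝ (⊤ : ℕ∞) θ I := by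
    rw [contDiffOn_infty_iff_deriv_of_isOpen hIopen]
    exact ⟨fun s hs => ((hθd s hs).differentiableAt).differentiableWithinAt,
      hg.congr fun s hs => (hθd s hs).deriv⟩
  have hcsm : ContDiffOn ℝ (⊤ : ℕ∞) (fun s => Real.cos (θ s)) I :=
    Real.contDiff_cos.comp_contDiffOn hθsm
  have hssm : ContDiffOn ℝ (⊤ : ℕ∞) (fun s => Real.sin (θ s)) I :=
    Real.contDiff_sin.comp_contDiffOn hθsm
  refine ⟨Z₁,
    (fun s => Real.cos (θ s) • Z₂ s + Real.sin (θ s) • Z₃ s),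
    (fun s => (-Real.sin (θ s)) • Z₂ s + Real.cos (θ s) • Z₃ s),
    x₁, (fun s => x₂ s * Real.cos (θ s)), (fun s => -(x₂ s * Real.sin (θ s))),
    ⟨hsZ₁, (hcsm.smul hsZ₂).add (hssm.smul hsZ₃),
      ((hssm.neg).smul hsZ₂).add (hcsm.smul hsZ₃), ?_⟩,
    ⟨hx₁, hx₂.mul hcsm, (hx₂.mul hssm).neg⟩, ?_⟩
  · -- orthonormality
    intro s hs
    obtain ⟨h11, h22, h33, h12, h13, h23, ht1, ht2, ht3⟩ := horth s hs
    have h21 : mink (Z₂ s) (Z₁ s) = 0 := (mink_comm _ _).trans h12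
    have h31 : mink (Z₃ s) (Z₁ s) = 0 := (mink_comm _ _).trans h13
    have h32 : mink (Z₃ s) (Z₂ s) = 0 := (mink_comm _ _).trans h23
    have hpy := Real.sin_sq_add_cos_sq (θ s)
    refine ⟨h11, ?_, ?_, ?_, ?_, ?_, ht1, ?_, ?_⟩
    · rw [mink_bilin]
      linear_combination (Real.cos (θ s))^2 * h22 + (Real.sin (θ s))^2 * h33 +
        (Real.cos (θ s) * Real.sin (θ s)) * h23 +
        (Real.sin (θ s) * Real.cos (θ s)) * h32 + hpy
    · rw [mink_bilin]
      linear_combination (Real.sin (θ s))^2 * h22 + (Real.cos (θ s))^2 * h33 -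
        (Real.sin (θ s) * Real.cos (θ s)) * h23 -
        (Real.cos (θ s) * Real.sin (θ s)) * h32 + hpy
    · rw [mink_right]
      linear_combination Real.cos (θ s) * h12 + Real.sin (θ s) * h13
    · rw [mink_right]
      linear_combination (-Real.sin (θ s)) * h12 + Real.cos (θ s) * h13
    · rw [mink_bilin]
      linear_combination (Real.cos (θ s) * (-Real.sin (θ s))) * h22 +
        (Real.cos (θ s))^2 * h23 - (Real.sin (θ s))^2 * h32 +
        (Real.sin (θ s) * Real.cos (θ s)) * h33
    · rw [mink_right]
      linear_combination Real.cos (θ s) * ht2 + Real.sin (θ s) * ht3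
    · rw [mink_right]
      linear_combination (-Real.sin (θ s)) * ht2 + Real.cos (θ s) * ht3
  · -- frame equations
    intro s hs
    obtain ⟨he0, he1, he2, he3⟩ := heqs s hs
    have hθs := hθd s hs
    have hZ₂' : HasDerivAt Z₂ (deriv Z₂ s) s :=
      ((hsZ₂.differentiableOn (by simp)).differentiableAt (hIopen.mem_nhds hs)).hasDerivAt
    have hZ₃' : HasDerivAt Z₃ (deriv Z₃ s) s :=
      ((hsZ₃.differentiableOn (by simp)).differentiableAt (hIopen.mem_nhds hs)).hasDerivAt
    have hpy := Real.sin_sq_add_cos_sq (θ s)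
    have hW₂ : HasDerivAt (fun s => Real.cos (θ s) • Z₂ s + Real.sin (θ s) • Z₃ s)
        ((Real.cos (θ s) • deriv Z₂ s + (-Real.sin (θ s) * g s) • Z₂ s) +
         (Real.sin (θ s) • deriv Z₃ s + (Real.cos (θ s) * g s) • Z₃ s)) s :=
      ((hθs.cos).smul hZ₂').add ((hθs.sin).smul hZ₃')
    have hW₃ : HasDerivAt (fun s => (-Real.sin (θ s)) • Z₂ s + Real.cos (θ s) • Z₃ s)
        (((-Real.sin (θ s)) • deriv Z₂ s + (-(Real.cos (θ s) * g s)) • Z₂ s) +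
         (Real.cos (θ s) • deriv Z₃ s + (-Real.sin (θ s) * g s) • Z₃ s)) s :=
      (((hθs.sin).neg).smul hZ₂').add ((hθs.cos).smul hZ₃')
    refine ⟨he0, ?_, ?_, ?_⟩
    · rw [he1]
      match_scalars
      · ring
      · linear_combination (-x₂ s) * hpy
      · ring
    · rw [hW₂.deriv, he2, he3]
      match_scalars <;> (first | ring | (simp only [hgdef]; ring))
    · rw [hW₃.deriv, he2, he3]
      match_scalars <;> (first | ring | (simp only [hgdef]; ring))
end
end

section
/- There exist an open interval I ⊆ ℝ and a time-like curve γ : I → 𝕃⁴ parametrized by proper time that admits a generalized Bishop frame of type C but does not admit a generalized Bishop frame of type D. -/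
open Set Real

noncomputable section

open Polynomial

namespace S3
-- (previous defs assumed; re-include)
def aa (s : ℝ) : ℝ := expNegInvGlue (-s)
def bb (s : ℝ) : ℝ := expNegInvGlue s
def da (s : ℝ) : ℝ := -((s^2)⁻¹ * expNegInvGlue (-s))
def db (s : ℝ) : ℝ := (s^2)⁻¹ * expNegInvGlue s

lemma hpd (x : ℝ) : HasDerivAt expNegInvGlue ((x⁻¹)^2 * expNegInvGlue x) x := by
  have := expNegInvGlue.hasDerivAt_polynomial_eval_inv_mul 1 x
  simpa using this

lemma hadiff (s : ℝ) : HasDerivAt aa (da s) s := by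
  have h := (hpd (-s)).comp s (hasDerivAt_neg s)
  show HasDerivAt (expNegInvGlue ∘ Neg.neg) (da s) s
  simpa [da, mul_comm] using h

lemma hbdiff (s : ℝ) : HasDerivAt bb (db s) s := by
  have := hpd s; show HasDerivAt expNegInvGlue (db s) s; simpa [db, inv_pow] using this

lemma contDiff_db : ContDiff ℝ (⊤:ℕ∞) db := by
  have h := expNegInvGlue.contDiff_polynomial_eval_inv_mul (n := ⊤) (X^2 : ℝ[X])
  show ContDiff ℝ _ (fun s : ℝ => (s^2)⁻¹ * expNegInvGlue s)
  simpa [db] using h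

lemma contDiff_da : ContDiff ℝ (⊤:ℕ∞) da := by
  have h := (expNegInvGlue.contDiff_polynomial_eval_inv_mul (n := ⊤) (X^2 : ℝ[X])).comp
    (contDiff_neg : ContDiff ℝ (⊤:ℕ∞) (fun s : ℝ => -s))
  have h2 : ContDiff ℝ (⊤:ℕ∞) (fun s : ℝ => ((s:ℝ)^2)⁻¹ * expNegInvGlue (-s)) := by
    have := h; simp only [Function.comp_def] at this; simpa using this
  exact h2.neg

lemma contDiff_aa : ContDiff ℝ (⊤:ℕ∞) aa :=
  expNegInvGlue.contDiff.comp contDiff_neg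
lemma contDiff_bb : ContDiff ℝ (⊤:ℕ∞) bb := expNegInvGlue.contDiff

lemma bb_nonpos {s : ℝ} (h : s ≤ 0) : bb s = 0 := expNegInvGlue.zero_of_nonpos h
lemma db_nonpos {s : ℝ} (h : s ≤ 0) : db s = 0 := by
  simp [db, expNegInvGlue.zero_of_nonpos h]
lemma aa_nonneg' {s : ℝ} (h : 0 ≤ s) : aa s = 0 :=
  expNegInvGlue.zero_of_nonpos (by linarith)
lemma da_nonneg' {s : ℝ} (h : 0 ≤ s) : da s = 0 := by
  simp [da, expNegInvGlue.zero_of_nonpos (show -s ≤ 0 by linarith)]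
lemma db_pos {s : ℝ} (h : 0 < s) : 0 < db s :=
  mul_pos (inv_pos.2 (pow_pos h 2)) (expNegInvGlue.pos_of_pos h)
lemma da_neg {s : ℝ} (h : s < 0) : da s < 0 := by
  have : 0 < ((s:ℝ)^2)⁻¹ * expNegInvGlue (-s) :=
    mul_pos (inv_pos.2 (by nlinarith)) (expNegInvGlue.pos_of_pos (by linarith))
  simpa [da] using this
lemma aa_pos {s : ℝ} (h : s < 0) : 0 < aa s := expNegInvGlue.pos_of_pos (by linarith)
lemma bb_pos {s : ℝ} (h : 0 < s) : 0 < bb s := expNegInvGlue.pos_of_pos h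
lemma ab_zero (s : ℝ) : aa s * bb s = 0 := by
  rcases le_or_gt s 0 with h | h
  · simp [bb_nonpos h]
  · simp [aa_nonneg' h.le]

def q1 (s : ℝ) : ℝ := Real.sqrt (1 + aa s ^ 2)
def q2 (s : ℝ) : ℝ := Real.sqrt (1 + bb s ^ 2)
def cc (s : ℝ) : ℝ := Real.sqrt (1 + aa s ^ 2 + bb s ^ 2)

lemma q1_pos (s : ℝ) : 0 < q1 s := Real.sqrt_pos.2 (by nlinarith [sq_nonneg (aa s)])
lemma q2_pos (s : ℝ) : 0 < q2 s := Real.sqrt_pos.2 (by nlinarith [sq_nonneg (bb s)])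
lemma cc_pos (s : ℝ) : 0 < cc s :=
  Real.sqrt_pos.2 (by nlinarith [sq_nonneg (aa s), sq_nonneg (bb s)])
lemma q1_sq (s : ℝ) : q1 s ^ 2 = 1 + aa s ^ 2 :=
  Real.sq_sqrt (by nlinarith [sq_nonneg (aa s)])
lemma q2_sq (s : ℝ) : q2 s ^ 2 = 1 + bb s ^ 2 :=
  Real.sq_sqrt (by nlinarith [sq_nonneg (bb s)])
lemma cc_sq (s : ℝ) : cc s ^ 2 = 1 + aa s ^ 2 + bb s ^ 2 :=
  Real.sq_sqrt (by nlinarith [sq_nonneg (aa s), sq_nonneg (bb s)])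
lemma cc_eq_q1 {s : ℝ} (h : s ≤ 0) : cc s = q1 s := by
  simp [cc, q1, bb_nonpos h]
lemma cc_eq_q2 {s : ℝ} (h : 0 ≤ s) : cc s = q2 s := by
  rw [cc, q2, aa_nonneg' h]; ring_nf
lemma hq1diff (s : ℝ) : HasDerivAt q1 (aa s * da s / q1 s) s := by
  have hin : HasDerivAt (fun s => 1 + aa s ^ 2) (2 * aa s * da s) s := by
    simpa [mul_comm, mul_assoc, mul_left_comm] using
      (hasDerivAt_const s (1:ℝ)).fun_add (((hadiff s).fun_pow 2))
  have h := hin.sqrt (by nlinarith [sq_nonneg (aa s)])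
  convert h using 1
  · rfl
  rw [show Real.sqrt (1 + aa s ^ 2) = q1 s from rfl]
  have h0 : q1 s ≠ 0 := (q1_pos s).ne'
  field_simp
lemma hq2diff (s : ℝ) : HasDerivAt q2 (bb s * db s / q2 s) s := by
  have hin : HasDerivAt (fun s => 1 + bb s ^ 2) (2 * bb s * db s) s := by
    simpa [mul_comm, mul_assoc, mul_left_comm] using
      (hasDerivAt_const s (1:ℝ)).fun_add (((hbdiff s).fun_pow 2))
  have h := hin.sqrt (by nlinarith [sq_nonneg (bb s)])
  convert h using 1
  · rfl
  rw [show Real.sqrt (1 + bb s ^ 2) = q2 s from rfl]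
  have h0 : q2 s ≠ 0 := (q2_pos s).ne'
  field_simp
lemma hccdiff (s : ℝ) : HasDerivAt cc ((aa s * da s + bb s * db s) / cc s) s := by
  have hin : HasDerivAt (fun s => 1 + aa s ^ 2 + bb s ^ 2)
      (2 * aa s * da s + 2 * bb s * db s) s := by
    have := (((hasDerivAt_const s (1:ℝ)).fun_add ((hadiff s).fun_pow 2)).fun_add ((hbdiff s).fun_pow 2))
    refine this.congr_deriv ?_
    norm_num <;> ring
  have h := hin.sqrt (by nlinarith [sq_nonneg (aa s), sq_nonneg (bb s)])
  convert h using 1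
  · rfl
  rw [show Real.sqrt (1 + aa s ^ 2 + bb s ^ 2) = cc s from rfl]
  have h0 : cc s ≠ 0 := (cc_pos s).ne'
  field_simp
lemma contDiff_q1 : ContDiff ℝ (⊤:ℕ∞) q1 :=
  ((contDiff_const.add (contDiff_aa.pow 2)).sqrt
    (fun s => by nlinarith [sq_nonneg (aa s)]))
lemma contDiff_q2 : ContDiff ℝ (⊤:ℕ∞) q2 :=
  ((contDiff_const.add (contDiff_bb.pow 2)).sqrt
    (fun s => by nlinarith [sq_nonneg (bb s)]))
lemma contDiff_cc : ContDiff ℝ (⊤:ℕ∞) cc :=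
  (((contDiff_const.add (contDiff_aa.pow 2)).add (contDiff_bb.pow 2)).sqrt
    (fun s => by nlinarith [sq_nonneg (aa s), sq_nonneg (bb s)]))

def Tv (s : ℝ) : Fin 4 → ℝ := ![cc s, aa s, bb s, 0]
def Z1v (s : ℝ) : Fin 4 → ℝ := ![aa s, q1 s, 0, 0]
def Z2v (s : ℝ) : Fin 4 → ℝ := ![bb s, 0, q2 s, 0]
def Z3v (_ : ℝ) : Fin 4 → ℝ := ![0, 0, 0, 1]
def X1 (s : ℝ) : ℝ := da s / q1 s
def X2 (s : ℝ) : ℝ := db s / q2 s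
def Av (s : ℝ) : Fin 4 → ℝ := ![(aa s * da s + bb s * db s) / cc s, da s, db s, 0]
def G (s : ℝ) : Fin 4 → ℝ :=
  ![∫ t in (0:ℝ)..s, cc t, ∫ t in (0:ℝ)..s, aa t, ∫ t in (0:ℝ)..s, bb t, 0]

lemma hGdiff (s : ℝ) : HasDerivAt G (Tv s) s := by
  rw [hasDerivAt_pi]
  intro i
  have key : ∀ f : ℝ → ℝ, Continuous f →
      HasDerivAt (fun u => ∫ t in (0:ℝ)..u, f t) (f s) s := fun f hf =>
    intervalIntegral.integral_hasDerivAt_right (hf.intervalIntegrable _ _)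
      (hf.aestronglyMeasurable.stronglyMeasurableAtFilter) hf.continuousAt
  fin_cases i
  · simpa [G, Tv] using key cc contDiff_cc.continuous
  · simpa [G, Tv] using key aa contDiff_aa.continuous
  · simpa [G, Tv] using key bb contDiff_bb.continuous
  · simpa [G, Tv] using hasDerivAt_const s (0:ℝ)

lemma derivG : deriv G = Tv := funext fun s => (hGdiff s).deriv

lemma hTdiff (s : ℝ) : HasDerivAt Tv (Av s) s := by
  rw [hasDerivAt_pi]
  intro i
  fin_cases i
  · simpa [Tv, Av] using hccdiff s
  · simpa [Tv, Av] using hadiff s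
  · simpa [Tv, Av] using hbdiff s
  · simpa [Tv, Av] using hasDerivAt_const s (0:ℝ)

lemma derivT : deriv Tv = Av := funext fun s => (hTdiff s).deriv

lemma hZ1diff (s : ℝ) : HasDerivAt Z1v ![da s, aa s * da s / q1 s, 0, 0] s := by
  rw [hasDerivAt_pi]
  intro i
  fin_cases i
  · simpa [Z1v] using hadiff s
  · simpa [Z1v] using hq1diff s
  · simpa [Z1v] using hasDerivAt_const s (0:ℝ)
  · simpa [Z1v] using hasDerivAt_const s (0:ℝ)

lemma hZ2diff (s : ℝ) : HasDerivAt Z2v ![db s, 0, bb s * db s / q2 s, 0] s := by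
  rw [hasDerivAt_pi]
  intro i
  fin_cases i
  · simpa [Z2v] using hbdiff s
  · simpa [Z2v] using hasDerivAt_const s (0:ℝ)
  · simpa [Z2v] using hq2diff s
  · simpa [Z2v] using hasDerivAt_const s (0:ℝ)

lemma hZ3diff (s : ℝ) : HasDerivAt Z3v 0 s := hasDerivAt_const _ _

lemma contDiff_G : ContDiff ℝ (⊤:ℕ∞) G := by
  rw [contDiff_pi]
  intro i
  have key : ∀ f : ℝ → ℝ, ContDiff ℝ (⊤:ℕ∞) f →
      ContDiff ℝ (⊤:ℕ∞) (fun u => ∫ t in (0:ℝ)..u, f t) := by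
    intro f hf
    rw [contDiff_infty_iff_deriv]
    constructor
    · intro u
      exact (intervalIntegral.integral_hasDerivAt_right
        (hf.continuous.intervalIntegrable _ _)
        (hf.continuous.aestronglyMeasurable.stronglyMeasurableAtFilter)
        hf.continuous.continuousAt).differentiableAt
    · have : deriv (fun u => ∫ t in (0:ℝ)..u, f t) = f := funext fun u =>
        (intervalIntegral.integral_hasDerivAt_right
          (hf.continuous.intervalIntegrable _ _)
          (hf.continuous.aestronglyMeasurable.stronglyMeasurableAtFilter)
          hf.continuous.continuousAt).deriv
      rw [this]
      exact hf
  fin_cases i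
  · simpa [G] using key cc contDiff_cc
  · simpa [G] using key aa contDiff_aa
  · simpa [G] using key bb contDiff_bb
  · simpa [G] using contDiff_const (c := (0:ℝ))


lemma contDiff_Z1 : ContDiff ℝ (⊤:ℕ∞) Z1v := by
  rw [contDiff_pi]; intro i; fin_cases i
  · simpa [Z1v] using contDiff_aa
  · simpa [Z1v] using contDiff_q1
  · simpa [Z1v] using contDiff_const (c := (0:ℝ))
  · simpa [Z1v] using contDiff_const (c := (0:ℝ))

lemma contDiff_Z2 : ContDiff ℝ (⊤:ℕ∞) Z2v := by
  rw [contDiff_pi]; intro i; fin_cases i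
  · simpa [Z2v] using contDiff_bb
  · simpa [Z2v] using contDiff_const (c := (0:ℝ))
  · simpa [Z2v] using contDiff_q2
  · simpa [Z2v] using contDiff_const (c := (0:ℝ))

lemma contDiff_Z3 : ContDiff ℝ (⊤:ℕ∞) Z3v := contDiff_const

lemma contDiff_X1 : ContDiff ℝ (⊤:ℕ∞) X1 :=
  contDiff_da.div contDiff_q1 (fun s => (q1_pos s).ne')
lemma contDiff_X2 : ContDiff ℝ (⊤:ℕ∞) X2 :=
  contDiff_db.div contDiff_q2 (fun s => (q2_pos s).ne')

lemma mink_TT (s : ℝ) : mink (Tv s) (Tv s) = -1 := by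
  have := cc_sq s
  simp [mink, Tv]
  nlinarith

lemma mink_frame (s : ℝ) :
    mink (Z1v s) (Z1v s) = 1 ∧ mink (Z2v s) (Z2v s) = 1 ∧ mink (Z3v s) (Z3v s) = 1 ∧
    mink (Z1v s) (Z2v s) = 0 ∧ mink (Z1v s) (Z3v s) = 0 ∧ mink (Z2v s) (Z3v s) = 0 ∧
    mink (Tv s) (Z1v s) = 0 ∧ mink (Tv s) (Z2v s) = 0 ∧ mink (Tv s) (Z3v s) = 0 := by
  have h1 := q1_sq s
  have h2 := q2_sq s
  have hab := ab_zero s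
  refine ⟨by simp [mink, Z1v]; nlinarith, by simp [mink, Z2v]; nlinarith, by simp [mink, Z3v],
    by simp [mink, Z1v, Z2v]; exact mul_eq_zero.mp hab, by simp [mink, Z1v, Z3v], by simp [mink, Z2v, Z3v],
    ?_, ?_, by simp [mink, Tv, Z3v]⟩
  · rcases le_or_gt s 0 with h | h
    · simp [mink, Tv, Z1v, cc_eq_q1 h]; ring
    · simp [mink, Tv, Z1v, aa_nonneg' h.le]
  · rcases le_or_gt s 0 with h | h
    · simp [mink, Tv, Z2v, bb_nonpos h]
    · simp [mink, Tv, Z2v, cc_eq_q2 h.le]; ring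

lemma smul4 (x : ℝ) (v : Fin 4 → ℝ) (i : Fin 4) : (x • v) i = x * v i := rfl

lemma eqE1 (s : ℝ) : Av s = X1 s • Z1v s + X2 s • Z2v s := by
  funext i
  have hq1 := (q1_pos s).ne'
  have hq2 := (q2_pos s).ne'
  fin_cases i
  · rcases le_or_gt s 0 with h | h
    · simp [Av, Z1v, Z2v, X1, X2, smul4, bb_nonpos h, db_nonpos h, cc_eq_q1 h]
      field_simp
    · simp [Av, Z1v, Z2v, X1, X2, smul4, aa_nonneg' h.le, da_nonneg' h.le, cc_eq_q2 h.le]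
      field_simp
  · simp [Av, Z1v, Z2v, X1, X2, smul4]; field_simp
  · simp [Av, Z1v, Z2v, X1, X2, smul4]; field_simp
  · simp [Av, Z1v, Z2v, X1, X2, smul4]

lemma eqE2 (s : ℝ) : ![da s, aa s * da s / q1 s, 0, 0] = X1 s • Tv s + (0:ℝ) • Z3v s := by
  funext i
  have hq1 := (q1_pos s).ne'
  fin_cases i
  · rcases le_or_gt s 0 with h | h
    · simp [Tv, Z3v, X1, smul4, cc_eq_q1 h]; field_simp
    · simp [Tv, Z3v, X1, smul4, da_nonneg' h.le]
  · simp [Tv, Z3v, X1, smul4]; ring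
  · rcases le_or_gt s 0 with h | h
    · simp [Tv, Z3v, X1, smul4, bb_nonpos h]
    · simp [Tv, Z3v, X1, smul4, da_nonneg' h.le]
  · simp [Tv, Z3v, X1, smul4]

lemma eqE3 (s : ℝ) : ![db s, 0, bb s * db s / q2 s, 0] = X2 s • Tv s := by
  funext i
  have hq2 := (q2_pos s).ne'
  fin_cases i
  · rcases le_or_gt s 0 with h | h
    · simp [Tv, X2, smul4, db_nonpos h]
    · simp [Tv, X2, smul4, cc_eq_q2 h.le]; field_simp
  · rcases le_or_gt s 0 with h | h
    · simp [Tv, X2, smul4, db_nonpos h]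
    · simp [Tv, X2, smul4, aa_nonneg' h.le]
  · simp [Tv, X2, smul4]; ring
  · simp [Tv, X2, smul4]

lemma derivderivG : deriv (deriv G) = Av := by rw [derivG]; exact derivT

lemma admitsC : AdmitsC Set.univ G := by
  refine ⟨Z1v, Z2v, Z3v, X1, X2, (fun _ => 0), ?_, ?_, ?_⟩
  · rw [derivG]
    exact ⟨contDiff_Z1.contDiffOn, contDiff_Z2.contDiffOn, contDiff_Z3.contDiffOn,
      fun s _ => mink_frame s⟩
  · exact ⟨contDiff_X1.contDiffOn, contDiff_X2.contDiffOn, contDiff_const.contDiffOn⟩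
  · intro s _
    rw [derivderivG, derivG]
    refine ⟨eqE1 s, ?_, ?_, ?_⟩
    · rw [(hZ1diff s).deriv]; exact eqE2 s
    · rw [(hZ2diff s).deriv]; exact eqE3 s
    · rw [(hZ3diff s).deriv]
      funext i; simp [Z3v, smul4]

lemma not_admitsD : ¬ AdmitsD Set.univ G := by
  rintro ⟨W1, W2, W3, y1, y2, y3, ⟨hW1s, -, -, hortho⟩, -, heq⟩
  have hA : ∀ s, Av s = y1 s • W1 s := by
    intro s
    have := (heq s (mem_univ s)).1
    rwa [derivderivG] at this
  rw [derivG] at hortho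
  have hcont : Continuous W1 := continuousOn_univ.mp hW1s.continuousOn
  -- left-side facts
  have hleft : ∀ s < 0, W1 s 2 = 0 ∧ W1 s 3 = 0 ∧ (W1 s 0)^2 = aa s ^ 2 := by
    intro s hs
    have h := congrFun (hA s)
    have h0 : (aa s * da s + bb s * db s) / cc s = y1 s * W1 s 0 := h 0
    have h1 : da s = y1 s * W1 s 1 := h 1
    have h2 : db s = y1 s * W1 s 2 := h 2
    have h3 : (0:ℝ) = y1 s * W1 s 3 := h 3
    have hbb := bb_nonpos hs.le
    have hdb := db_nonpos hs.le
    have hda := (da_neg hs).ne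
    have hy : y1 s ≠ 0 := by
      intro hy0
      rw [hy0, zero_mul] at h1
      exact hda h1
    have hW2 : W1 s 2 = 0 := by
      rw [hdb] at h2
      rcases mul_eq_zero.mp h2.symm with h' | h'
      · exact absurd h' hy
      · exact h'
    have hW3 : W1 s 3 = 0 := by
      rcases mul_eq_zero.mp h3.symm with h' | h'
      · exact absurd h' hy
      · exact h'
    refine ⟨hW2, hW3, ?_⟩
    have hnorm := (hortho s (mem_univ s)).1
    simp only [mink] at hnorm
    rw [hW2, hW3] at hnorm
    have hcc := cc_pos s
    have hcc2 : cc s ^ 2 = 1 + aa s ^ 2 := by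
      have := cc_sq s; rw [hbb] at this; simpa using this
    -- from h0 : (aa s * da s + bb s * db s)/cc s = y1 s * W1 s 0
    rw [hbb, hdb] at h0
    have hcu : cc s * W1 s 0 = aa s * W1 s 1 := by
      have e0 : cc s * (y1 s * W1 s 0) = aa s * da s := by
        rw [← h0]; field_simp; simp
      have e1 : y1 s * W1 s 1 = da s := h1.symm
      have : y1 s * (cc s * W1 s 0 - aa s * W1 s 1) = 0 := by
        rw [mul_sub]
        have : y1 s * (cc s * W1 s 0) = cc s * (y1 s * W1 s 0) := by ring
        rw [this, e0]
        have : y1 s * (aa s * W1 s 1) = aa s * (y1 s * W1 s 1) := by ring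
        rw [this, e1]
        ring
      rcases mul_eq_zero.mp this with h' | h'
      · exact absurd h' hy
      · linarith [h']
    have hsq : (cc s * W1 s 0)^2 = (aa s * W1 s 1)^2 := by rw [hcu]
    nlinarith [hsq, hcc2, hnorm]
  have hright : ∀ s > 0, W1 s 1 = 0 := by
    intro s hs
    have h := congrFun (hA s)
    have h1 : da s = y1 s * W1 s 1 := h 1
    have h2 : db s = y1 s * W1 s 2 := h 2
    have hda := da_nonneg' hs.le
    have hy : y1 s ≠ 0 := by
      intro hy0
      rw [hy0, zero_mul] at h2
      exact (db_pos hs).ne' h2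
    rw [hda] at h1
    rcases mul_eq_zero.mp h1.symm with h' | h'
    · exact absurd h' hy
    · exact h'
  -- limits at 0
  have hW1c : ∀ i, Continuous (fun s => W1 s i) := fun i => (continuous_apply i).comp hcont
  have limleft : ∀ f : ℝ → ℝ, Continuous f → (∀ s < 0, f s = 0) → f 0 = 0 := by
    intro f hf hz
    have t1 : Filter.Tendsto f (nhdsWithin 0 (Iio 0)) (nhds (f 0)) :=
      (hf.tendsto 0).mono_left nhdsWithin_le_nhds
    have t2 : Filter.Tendsto f (nhdsWithin 0 (Iio 0)) (nhds 0) := by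
      have hev : (fun _ => (0:ℝ)) =ᶠ[nhdsWithin (0:ℝ) (Iio 0)] f := by
        filter_upwards [self_mem_nhdsWithin] with s hs
        exact (hz s hs).symm
      exact Filter.Tendsto.congr' hev tendsto_const_nhds
    exact tendsto_nhds_unique t1 t2
  have limright : ∀ f : ℝ → ℝ, Continuous f → (∀ s > 0, f s = 0) → f 0 = 0 := by
    intro f hf hz
    have t1 : Filter.Tendsto f (nhdsWithin 0 (Ioi 0)) (nhds (f 0)) :=
      (hf.tendsto 0).mono_left nhdsWithin_le_nhds
    have t2 : Filter.Tendsto f (nhdsWithin 0 (Ioi 0)) (nhds 0) := by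
      have hev : (fun _ => (0:ℝ)) =ᶠ[nhdsWithin (0:ℝ) (Ioi 0)] f := by
        filter_upwards [self_mem_nhdsWithin] with s hs
        exact (hz s hs).symm
      exact Filter.Tendsto.congr' hev tendsto_const_nhds
    exact tendsto_nhds_unique t1 t2
  have w2 : W1 0 2 = 0 := limleft _ (hW1c 2) (fun s hs => (hleft s hs).1)
  have w3 : W1 0 3 = 0 := limleft _ (hW1c 3) (fun s hs => (hleft s hs).2.1)
  have w1 : W1 0 1 = 0 := limright _ (hW1c 1) hright
  have w0 : (W1 0 0)^2 = 0 := by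
    have hsq : Continuous (fun s => (W1 s 0)^2 - aa s ^ 2) :=
      ((hW1c 0).pow 2).sub (contDiff_aa.continuous.pow 2)
    have := limleft _ hsq (fun s hs => by rw [(hleft s hs).2.2]; ring)
    have ha0 : aa 0 = 0 := by simpa [aa] using expNegInvGlue.zero
    rw [ha0] at this
    simpa using this
  have hnorm0 := (hortho 0 (mem_univ 0)).1
  simp only [mink] at hnorm0
  rw [w1, w2, w3] at hnorm0
  nlinarith [w0, hnorm0]


end S3

/-- there is a time-like curve parametrized by proper time that admits a
generalized Bishop frame of type C but not one of type D. -/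
theorem stmt_3 :
    ∃ (I : Set ℝ) (γ : ℝ → Fin 4 → ℝ), IsOpen I ∧ I.OrdConnected ∧ I.Nonempty ∧
      ProperTime I γ ∧ AdmitsC I γ ∧ ¬ AdmitsD I γ := by
  refine ⟨Set.univ, S3.G, isOpen_univ, ordConnected_univ, univ_nonempty,
    ⟨S3.contDiff_G.contDiffOn, ?_⟩, S3.admitsC, S3.not_admitsD⟩
  intro s _
  rw [S3.derivG]
  exact S3.mink_TT s
end
end

section
/- There exist an open interval I ⊆ ℝ and a time-like curve γ : I → 𝕃⁴ parametrized by proper time that does not admit a generalized Bishop frame of type C. -/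
open Set Real

noncomputable section

open scoped Topology
open Polynomial Filter Function Complex

/-- Flat oscillating glue function: `exp (-(1+i)/x)` for `x > 0`, `0` otherwise. -/
def cGlue (x : ℝ) : ℂ :=
  if x ≤ 0 then 0 else Complex.exp (-(1 + Complex.I) * (x⁻¹ : ℝ))

namespace cGlue

theorem zero_of_nonpos {x : ℝ} (hx : x ≤ 0) : cGlue x = 0 := by simp [cGlue, hx]

theorem eq_of_pos {x : ℝ} (hx : 0 < x) :
    cGlue x = Complex.exp (-(1 + Complex.I) * (x⁻¹ : ℝ)) := by
  simp [cGlue, not_le.2 hx]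

theorem abs_eq (x : ℝ) : ‖cGlue x‖ = expNegInvGlue x := by
  rcases le_or_gt x 0 with hx | hx
  · simp [zero_of_nonpos hx, expNegInvGlue.zero_of_nonpos hx]
  · rw [eq_of_pos hx, Complex.norm_exp]
    have : (-(1 + Complex.I) * (x⁻¹ : ℝ)).re = -x⁻¹ := by
      simp [Complex.add_re, Complex.mul_re]
    rw [this]
    simp [expNegInvGlue, not_le.2 hx]

/-- A polynomial bound for complex polynomials evaluated at real points. -/
theorem exists_poly_bound (p : ℂ[X]) :
    ∃ q : ℝ[X], ∀ r : ℝ, ‖p.eval (r : ℂ)‖ ≤ q.eval r := by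
  induction p using Polynomial.induction_on' with
  | add f g hf hg =>
    obtain ⟨qf, hqf⟩ := hf
    obtain ⟨qg, hqg⟩ := hg
    refine ⟨qf + qg, fun r => ?_⟩
    calc ‖(f + g).eval (r:ℂ)‖ ≤ ‖f.eval (r:ℂ)‖ + ‖g.eval (r:ℂ)‖ := by
          rw [Polynomial.eval_add]; exact norm_add_le _ _
      _ ≤ qf.eval r + qg.eval r := add_le_add (hqf r) (hqg r)
      _ = (qf + qg).eval r := by simp
  | monomial n c =>
    refine ⟨Polynomial.C ‖c‖ * (1 + X ^ (2 * n)), fun r => ?_⟩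
    have h1 : ‖(Polynomial.monomial n c).eval (r:ℂ)‖ = ‖c‖ * |r| ^ n := by
      simp [Polynomial.eval_monomial, norm_mul, norm_pow, Complex.norm_real]
    have h2 : |r| ^ n ≤ 1 + r ^ (2 * n) := by
      rcases le_or_gt |r| 1 with h | h
      · have h0 : |r| ^ n ≤ 1 := pow_le_one₀ (abs_nonneg r) h
        have h1 : (0:ℝ) ≤ r ^ (2 * n) := by
          have := sq_nonneg (r ^ n); rw [← pow_mul, mul_comm n 2] at this; linarith
        linarith
      · have h3 : |r| ^ n ≤ |r| ^ (2 * n) := by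
          apply pow_le_pow_right₀ h.le
          omega
        have h4 : |r| ^ (2 * n) = r ^ (2 * n) := by
          rw [← _root_.abs_pow]
          exact abs_of_nonneg ((even_two_mul n).pow_nonneg r)
        nlinarith [pow_nonneg (abs_nonneg r) n]
    have h5 : (0:ℝ) ≤ ‖c‖ := norm_nonneg c
    rw [h1, Polynomial.eval_mul, Polynomial.eval_C, Polynomial.eval_add, Polynomial.eval_one,
      Polynomial.eval_pow, Polynomial.eval_X]
    nlinarith

theorem tendsto_polynomial_inv_mul_zero (p : ℂ[X]) :
    Tendsto (fun x : ℝ ↦ p.eval ((x⁻¹ : ℝ) : ℂ) * cGlue x) (𝓝 0) (𝓝 0) := by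
  obtain ⟨q, hq⟩ := exists_poly_bound p
  have hmaj : Tendsto (fun x : ℝ ↦ q.eval x⁻¹ * expNegInvGlue x) (𝓝 0) (𝓝 0) :=
    expNegInvGlue.tendsto_polynomial_inv_mul_zero q
  apply squeeze_zero_norm _ hmaj
  intro x
  rw [norm_mul]
  have h1 : ‖cGlue x‖ = expNegInvGlue x := abs_eq x
  rw [h1]
  apply mul_le_mul_of_nonneg_right (hq _) (expNegInvGlue.nonneg x)

theorem hasDerivAt_polynomial_eval_inv_mul (p : ℂ[X]) (x : ℝ) :
    HasDerivAt (fun x : ℝ ↦ p.eval ((x⁻¹ : ℝ) : ℂ) * cGlue x)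
      ((X ^ 2 * (Polynomial.C (1 + Complex.I) * p - derivative p)).eval (x⁻¹ : ℝ) * cGlue x) x := by
  rcases lt_trichotomy x 0 with hx | rfl | hx
  · rw [zero_of_nonpos hx.le, mul_zero]
    refine (hasDerivAt_const _ 0).congr_of_eventuallyEq ?_
    filter_upwards [gt_mem_nhds hx] with y hy
    rw [zero_of_nonpos hy.le, mul_zero]
  · rw [zero_of_nonpos le_rfl, mul_zero, hasDerivAt_iff_tendsto_slope]
    refine ((tendsto_polynomial_inv_mul_zero (p * X)).mono_left inf_le_left).congr fun y ↦ ?_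
    rw [slope_def_module]
    rw [zero_of_nonpos le_rfl, mul_zero, sub_zero, sub_zero]
    rw [Polynomial.eval_mul, Polynomial.eval_X]
    push_cast
    rw [Complex.real_smul]
    push_cast
    ring
  · have hne : x ≠ 0 := hx.ne'
    have hF : HasDerivAt (fun z : ℂ => p.eval z * Complex.exp (-(1 + Complex.I) * z))
        ((derivative p).eval ((x⁻¹:ℝ):ℂ) * Complex.exp (-(1 + Complex.I) * (x⁻¹:ℝ))
          + p.eval ((x⁻¹:ℝ):ℂ) * (-(1 + Complex.I) * Complex.exp (-(1 + Complex.I) * (x⁻¹:ℝ))))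
        ((x⁻¹ : ℝ) : ℂ) := by
      have h1 := Polynomial.hasDerivAt p (((x⁻¹ : ℝ)) : ℂ)
      have h2 : HasDerivAt (fun z : ℂ => Complex.exp (-(1 + Complex.I) * z))
          (-(1 + Complex.I) * Complex.exp (-(1 + Complex.I) * ((x⁻¹:ℝ):ℂ))) ((x⁻¹:ℝ):ℂ) := by
        have := ((hasDerivAt_id (((x⁻¹:ℝ)):ℂ)).const_mul (-(1 + Complex.I))).cexp
        simpa [mul_comm] using this
      exact h1.mul h2
    have hG : HasDerivAt (fun t : ℝ => p.eval ((t:ℂ)) * Complex.exp (-(1 + Complex.I) * (t : ℂ)))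
        ((derivative p).eval ((x⁻¹:ℝ):ℂ) * Complex.exp (-(1 + Complex.I) * (x⁻¹:ℝ))
          + p.eval ((x⁻¹:ℝ):ℂ) * (-(1 + Complex.I) * Complex.exp (-(1 + Complex.I) * (x⁻¹:ℝ))))
        (x⁻¹ : ℝ) := hF.comp_ofReal
    have hinv : HasDerivAt (fun t : ℝ => t⁻¹) (-(x ^ 2)⁻¹) x := hasDerivAt_inv hne
    have hcomp := hG.scomp x hinv
    have heq : (fun y : ℝ => p.eval ((y⁻¹ : ℝ) : ℂ) * cGlue y) =ᶠ[nhds x]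
        ((fun t : ℝ => p.eval ((t:ℂ)) * Complex.exp (-(1 + Complex.I) * (t : ℂ))) ∘ Inv.inv) := by
      filter_upwards [lt_mem_nhds hx] with y hy
      rw [eq_of_pos hy]; rfl
    refine (hcomp.congr_of_eventuallyEq heq).congr_deriv ?_
    rw [eq_of_pos hx, Complex.real_smul]
    push_cast
    simp only [Polynomial.eval_mul, Polynomial.eval_pow, Polynomial.eval_X,
      Polynomial.eval_sub, Polynomial.eval_C]
    push_cast
    ring

theorem differentiable_polynomial_eval_inv_mul (p : ℂ[X]) :
    Differentiable ℝ (fun x : ℝ ↦ p.eval ((x⁻¹ : ℝ) : ℂ) * cGlue x) := fun x ↦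
  (hasDerivAt_polynomial_eval_inv_mul p x).differentiableAt

theorem contDiff_polynomial_eval_inv_mul {n : ℕ∞} (p : ℂ[X]) :
    ContDiff ℝ n (fun x : ℝ ↦ p.eval ((x⁻¹ : ℝ) : ℂ) * cGlue x) := by
  apply contDiff_all_iff_nat.2 (fun m => ?_) n
  induction m generalizing p with
  | zero => exact contDiff_zero.2 (differentiable_polynomial_eval_inv_mul p).continuous
  | succ m ihm =>
    rw [show ((m + 1 : ℕ) : WithTop ℕ∞) = m + 1 from rfl]
    refine contDiff_succ_iff_deriv.2 ⟨differentiable_polynomial_eval_inv_mul _, by simp, ?_⟩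
    have hd : deriv (fun x : ℝ ↦ p.eval ((x⁻¹ : ℝ) : ℂ) * cGlue x) = fun x : ℝ ↦
        (X ^ 2 * (Polynomial.C (1 + Complex.I) * p - derivative p)).eval ((x⁻¹ : ℝ) : ℂ) * cGlue x :=
      funext fun y => (hasDerivAt_polynomial_eval_inv_mul p y).deriv
    rw [hd]
    exact ihm (X ^ 2 * (Polynomial.C (1 + Complex.I) * p - derivative p))

protected theorem contDiff {n : ℕ∞} : ContDiff ℝ n cGlue := by
  simpa using contDiff_polynomial_eval_inv_mul 1

end cGlue

/-! ### The curve construction -/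

/-- primitive -/
def prim (f : ℝ → ℝ) (s : ℝ) : ℝ := ∫ t in (0:ℝ)..s, f t

theorem prim_hasDerivAt {f : ℝ → ℝ} (hf : Continuous f) (s : ℝ) :
    HasDerivAt (prim f) (f s) s :=
  (hf.integral_hasStrictDerivAt 0 s).hasDerivAt

theorem prim_deriv {f : ℝ → ℝ} (hf : Continuous f) : deriv (prim f) = f :=
  funext fun s => (prim_hasDerivAt hf s).deriv

theorem prim_contDiff {f : ℝ → ℝ} (hf : ContDiff ℝ (⊤ : ℕ∞) f) :
    ContDiff ℝ (⊤ : ℕ∞) (prim f) := by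
  have : ContDiff ℝ (((⊤ : ℕ∞)) : WithTop ℕ∞) (prim f) := by
    rw [contDiff_infty_iff_deriv]
    refine ⟨fun s => (prim_hasDerivAt hf.continuous s).differentiableAt, ?_⟩
    rw [prim_deriv hf.continuous]
    exact hf
  exact this

def bd1 (x : ℝ) : ℝ := (cGlue x).re
def bd2 (x : ℝ) : ℝ := (cGlue x).im
def bd3 (x : ℝ) : ℝ := expNegInvGlue x

theorem bd1_contDiff : ContDiff ℝ (⊤ : ℕ∞) bd1 :=
  (Complex.reCLM.contDiff).comp cGlue.contDiff
theorem bd2_contDiff : ContDiff ℝ (⊤ : ℕ∞) bd2 :=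
  (Complex.imCLM.contDiff).comp cGlue.contDiff
theorem bd3_contDiff : ContDiff ℝ (⊤ : ℕ∞) bd3 := expNegInvGlue.contDiff

def b1 : ℝ → ℝ := prim bd1
def b2 : ℝ → ℝ := prim bd2
def b3 : ℝ → ℝ := prim bd3

/-- the tangent vector field -/
def Tc (s : ℝ) : Fin 4 → ℝ :=
  ![Real.sqrt (1 + (b1 s ^ 2 + b2 s ^ 2 + b3 s ^ 2)), b1 s, b2 s, b3 s]

/-- the curve -/
def gam (s : ℝ) : Fin 4 → ℝ := fun i => ∫ t in (0:ℝ)..s, Tc t i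

/-- acceleration -/
def Ader (s : ℝ) : Fin 4 → ℝ :=
  ![(b1 s * bd1 s + b2 s * bd2 s + b3 s * bd3 s) /
      Real.sqrt (1 + (b1 s ^ 2 + b2 s ^ 2 + b3 s ^ 2)),
    bd1 s, bd2 s, bd3 s]

theorem b1_contDiff : ContDiff ℝ (⊤ : ℕ∞) b1 := prim_contDiff bd1_contDiff
theorem b2_contDiff : ContDiff ℝ (⊤ : ℕ∞) b2 := prim_contDiff bd2_contDiff
theorem b3_contDiff : ContDiff ℝ (⊤ : ℕ∞) b3 := prim_contDiff bd3_contDiff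

theorem qpos (s : ℝ) : (0:ℝ) < 1 + (b1 s ^ 2 + b2 s ^ 2 + b3 s ^ 2) := by positivity

theorem Tc_contDiff : ContDiff ℝ (⊤ : ℕ∞) Tc := by
  rw [contDiff_pi]
  intro i
  fin_cases i <;>
    simp only [Tc, Matrix.cons_val_zero, Matrix.cons_val_one, Matrix.head_cons,
      Matrix.cons_val_two, Matrix.tail_cons, Matrix.cons_val_three]
  · exact (contDiff_const.add ((b1_contDiff.pow 2).add (b2_contDiff.pow 2) |>.add
      (b3_contDiff.pow 2))).sqrt fun s => (qpos s).ne'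
  · exact b1_contDiff
  · exact b2_contDiff
  · exact b3_contDiff

theorem Tc_hasDerivAt (s : ℝ) : HasDerivAt Tc (Ader s) s := by
  rw [hasDerivAt_pi]
  intro i
  have h1 := prim_hasDerivAt bd1_contDiff.continuous s
  have h2 := prim_hasDerivAt bd2_contDiff.continuous s
  have h3 := prim_hasDerivAt bd3_contDiff.continuous s
  fin_cases i <;>
    simp only [Tc, Ader, Matrix.cons_val_zero, Matrix.cons_val_one, Matrix.head_cons,
      Matrix.cons_val_two, Matrix.tail_cons, Matrix.cons_val_three]
  · show HasDerivAt (fun x => Real.sqrt (1 + (b1 x ^ 2 + b2 x ^ 2 + b3 x ^ 2)))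
        ((b1 s * bd1 s + b2 s * bd2 s + b3 s * bd3 s) /
          Real.sqrt (1 + (b1 s ^ 2 + b2 s ^ 2 + b3 s ^ 2))) s
    have hq : HasDerivAt (fun s => 1 + (b1 s ^ 2 + b2 s ^ 2 + b3 s ^ 2))
        (2 * b1 s * bd1 s + 2 * b2 s * bd2 s + 2 * b3 s * bd3 s) s := by
      have := (((h1.pow 2).add (h2.pow 2)).add (h3.pow 2)).const_add 1
      refine this.congr_deriv ?_
      simp only [b1, b2, b3]
      push_cast; ring
    have := hq.sqrt (qpos s).ne'
    convert this using 1
    have hne := Real.sqrt_ne_zero'.2 (qpos s)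
    field_simp
  · exact h1
  · exact h2
  · exact h3

theorem gam_hasDerivAt (s : ℝ) : HasDerivAt gam (Tc s) s := by
  rw [hasDerivAt_pi]
  intro i
  exact (((continuous_apply i).comp Tc_contDiff.continuous).integral_hasStrictDerivAt 0 s).hasDerivAt

theorem gam_deriv : deriv gam = Tc := funext fun s => (gam_hasDerivAt s).deriv

theorem Tc_deriv : deriv Tc = Ader := funext fun s => (Tc_hasDerivAt s).deriv

theorem gam_contDiff : ContDiff ℝ (⊤ : ℕ∞) gam := by
  have : ContDiff ℝ (((⊤ : ℕ∞)) : WithTop ℕ∞) gam := by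
    rw [contDiff_infty_iff_deriv]
    exact ⟨fun s => (gam_hasDerivAt s).differentiableAt, by rw [gam_deriv]; exact Tc_contDiff⟩
  exact this

theorem mink_Tc (s : ℝ) : mink (Tc s) (Tc s) = -1 := by
  simp only [mink, Tc, Matrix.cons_val_zero, Matrix.cons_val_one, Matrix.head_cons,
    Matrix.cons_val_two, Matrix.tail_cons, Matrix.cons_val_three]
  have h := Real.sq_sqrt (qpos s).le
  nlinarith [h]

theorem mink_smul_add (a b : ℝ) (u v w : Fin 4 → ℝ) :
    mink (a • u + b • v) w = a * mink u w + b * mink v w := by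
  simp only [mink, Pi.add_apply, Pi.smul_apply, smul_eq_mul]
  ring

theorem mink_smul_left (a : ℝ) (u w : Fin 4 → ℝ) :
    mink (a • u) w = a * mink u w := by
  simp only [mink, Pi.smul_apply, smul_eq_mul]
  ring

theorem tendsto_mink {α : Type*} {l : Filter α} {F G : α → Fin 4 → ℝ} {u v : Fin 4 → ℝ}
    (hF : Filter.Tendsto F l (nhds u)) (hG : Filter.Tendsto G l (nhds v)) :
    Filter.Tendsto (fun a => mink (F a) (G a)) l (nhds (mink u v)) := by
  have hFi : ∀ i, Filter.Tendsto (fun a => F a i) l (nhds (u i)) :=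
    fun i => (tendsto_pi_nhds.1 hF) i
  have hGi : ∀ i, Filter.Tendsto (fun a => G a i) l (nhds (v i)) :=
    fun i => (tendsto_pi_nhds.1 hG) i
  simp only [mink]
  exact ((((hFi 0).mul (hGi 0)).neg.add ((hFi 1).mul (hGi 1))).add
    ((hFi 2).mul (hGi 2))).add ((hFi 3).mul (hGi 3))

/-! ### sample sequences and values -/

def thc (c : ℝ) (n : ℕ) : ℝ := c + ((n : ℝ) + 1) * (2 * π)

def smp (c : ℝ) (n : ℕ) : ℝ := (thc c n)⁻¹

theorem thc_pos {c : ℝ} (hc : 0 ≤ c) (n : ℕ) : 0 < thc c n := by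
  have := Real.pi_pos
  have : (0:ℝ) < ((n:ℝ) + 1) * (2 * π) := by positivity
  simp only [thc]; linarith

theorem smp_pos {c : ℝ} (hc : 0 ≤ c) (n : ℕ) : 0 < smp c n :=
  inv_pos.2 (thc_pos hc n)

theorem smp_tendsto {c : ℝ} : Filter.Tendsto (smp c) Filter.atTop (nhds 0) := by
  apply Filter.Tendsto.inv_tendsto_atTop
  apply Filter.tendsto_atTop_add_const_left
  apply Filter.Tendsto.atTop_mul_const (by positivity : (0:ℝ) < 2 * π)
  exact Filter.tendsto_atTop_add_const_right _ _ tendsto_natCast_atTop_atTop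

theorem bd3_pos {s : ℝ} (hs : 0 < s) : 0 < bd3 s := expNegInvGlue.pos_of_pos hs

theorem bd3_eq {s : ℝ} (hs : 0 < s) : bd3 s = Real.exp (-s⁻¹) := by
  simp [bd3, expNegInvGlue, not_le.2 hs]

theorem bd1_eq {s : ℝ} (hs : 0 < s) : bd1 s = Real.exp (-s⁻¹) * Real.cos (s⁻¹) := by
  rw [bd1, cGlue.eq_of_pos hs, Complex.exp_re]
  have h1 : (-(1 + Complex.I) * ((s⁻¹ : ℝ) : ℂ)).re = -s⁻¹ := by
    simp [Complex.mul_re]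
  have h2 : (-(1 + Complex.I) * ((s⁻¹ : ℝ) : ℂ)).im = -s⁻¹ := by
    simp [Complex.mul_im]
  rw [h1, h2, Real.cos_neg]

theorem bd2_eq {s : ℝ} (hs : 0 < s) : bd2 s = -(Real.exp (-s⁻¹) * Real.sin (s⁻¹)) := by
  rw [bd2, cGlue.eq_of_pos hs, Complex.exp_im]
  have h1 : (-(1 + Complex.I) * ((s⁻¹ : ℝ) : ℂ)).re = -s⁻¹ := by
    simp [Complex.mul_re]
  have h2 : (-(1 + Complex.I) * ((s⁻¹ : ℝ) : ℂ)).im = -s⁻¹ := by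
    simp [Complex.mul_im]
  rw [h1, h2, Real.sin_neg]
  ring

theorem smp_inv {c : ℝ} (hc : 0 ≤ c) (n : ℕ) : (smp c n)⁻¹ = thc c n := by
  rw [smp, inv_inv]

theorem cos_thc (c : ℝ) (n : ℕ) : Real.cos (thc c n) = Real.cos c := by
  have : thc c n = c + (((n : ℤ) + 1 : ℤ) : ℝ) * (2 * π) := by
    simp [thc]
  rw [this, Real.cos_add_int_mul_two_pi]

theorem sin_thc (c : ℝ) (n : ℕ) : Real.sin (thc c n) = Real.sin c := by
  have : thc c n = c + (((n : ℤ) + 1 : ℤ) : ℝ) * (2 * π) := by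
    simp [thc]
  rw [this, Real.sin_add_int_mul_two_pi]

theorem bd1_sample {c : ℝ} (hc : 0 ≤ c) (n : ℕ) :
    bd1 (smp c n) = bd3 (smp c n) * Real.cos c := by
  rw [bd1_eq (smp_pos hc n), bd3_eq (smp_pos hc n), smp_inv hc, cos_thc]

theorem bd2_sample {c : ℝ} (hc : 0 ≤ c) (n : ℕ) :
    bd2 (smp c n) = -(bd3 (smp c n) * Real.sin c) := by
  rw [bd2_eq (smp_pos hc n), bd3_eq (smp_pos hc n), smp_inv hc, sin_thc]

/-! ### bounds -/

theorem bd3_mono {t s : ℝ} (ht : 0 ≤ t) (hts : t ≤ s) : bd3 t ≤ bd3 s := by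
  rcases eq_or_lt_of_le ht with h | h
  · rw [bd3, ← h, expNegInvGlue.zero]
    exact expNegInvGlue.nonneg s
  · have hs : 0 < s := lt_of_lt_of_le h hts
    rw [bd3_eq h, bd3_eq hs]
    apply Real.exp_le_exp.2
    have : s⁻¹ ≤ t⁻¹ := by gcongr
    linarith

theorem bd3_le_one (s : ℝ) : bd3 s ≤ 1 := by
  rcases le_or_gt s 0 with h | h
  · rw [bd3, expNegInvGlue.zero_of_nonpos h]; norm_num
  · rw [bd3_eq h]
    calc Real.exp (-s⁻¹) ≤ Real.exp 0 := Real.exp_le_exp.2 (neg_nonpos.2 (by positivity))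
      _ = 1 := Real.exp_zero

theorem abs_bd1_le (s : ℝ) : |bd1 s| ≤ bd3 s := by
  have h := Complex.abs_re_le_norm (cGlue s)
  rw [cGlue.abs_eq] at h
  exact h

theorem abs_bd2_le (s : ℝ) : |bd2 s| ≤ bd3 s := by
  have h := Complex.abs_im_le_norm (cGlue s)
  rw [cGlue.abs_eq] at h
  exact h

theorem abs_bd3_le (s : ℝ) : |bd3 s| ≤ bd3 s :=
  le_of_eq (abs_of_nonneg (expNegInvGlue.nonneg s))

theorem prim_bound {f : ℝ → ℝ} (hf : Continuous f) (hb : ∀ t, |f t| ≤ bd3 t)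
    {s : ℝ} (hs : 0 < s) : |prim f s| ≤ s * bd3 s := by
  rw [prim]
  calc |∫ t in (0:ℝ)..s, f t| ≤ ∫ t in (0:ℝ)..s, |f t| :=
        intervalIntegral.abs_integral_le_integral_abs hs.le
    _ ≤ ∫ _t in (0:ℝ)..s, bd3 s := by
        apply intervalIntegral.integral_mono_on hs.le
          (hf.abs.intervalIntegrable _ _) (intervalIntegrable_const)
        intro t ht
        exact (hb t).trans (bd3_mono ht.1 ht.2)
    _ = s * bd3 s := by rw [intervalIntegral.integral_const, smul_eq_mul, sub_zero]

theorem Ader_zero_eq (s : ℝ) :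
    Ader s 0 = (b1 s * bd1 s + b2 s * bd2 s + b3 s * bd3 s) /
      Real.sqrt (1 + (b1 s ^ 2 + b2 s ^ 2 + b3 s ^ 2)) := rfl

theorem Ader0_bound {s : ℝ} (hs : 0 < s) : |(bd3 s)⁻¹ * Ader s 0| ≤ 3 * s := by
  have hg := bd3_pos hs
  have hb1 : |b1 s| ≤ s * bd3 s := prim_bound bd1_contDiff.continuous abs_bd1_le hs
  have hb2 : |b2 s| ≤ s * bd3 s := prim_bound bd2_contDiff.continuous abs_bd2_le hs
  have hb3 : |b3 s| ≤ s * bd3 s := prim_bound bd3_contDiff.continuous abs_bd3_le hs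
  have hRpos : (0:ℝ) < Real.sqrt (1 + (b1 s ^ 2 + b2 s ^ 2 + b3 s ^ 2)) :=
    Real.sqrt_pos.2 (qpos s)
  have hR : 1 ≤ Real.sqrt (1 + (b1 s ^ 2 + b2 s ^ 2 + b3 s ^ 2)) := by
    have h1 := Real.sqrt_le_sqrt (show (1:ℝ) ≤ 1 + (b1 s ^ 2 + b2 s ^ 2 + b3 s ^ 2) by nlinarith [sq_nonneg (b1 s), sq_nonneg (b2 s), sq_nonneg (b3 s)])
    rwa [Real.sqrt_one] at h1
  have hnum : |b1 s * bd1 s + b2 s * bd2 s + b3 s * bd3 s| ≤ 3 * (s * bd3 s * bd3 s) := by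
    have e1 : |b1 s * bd1 s| ≤ s * bd3 s * bd3 s := by
      rw [abs_mul]
      exact mul_le_mul hb1 (abs_bd1_le s) (abs_nonneg _) (by positivity)
    have e2 : |b2 s * bd2 s| ≤ s * bd3 s * bd3 s := by
      rw [abs_mul]
      exact mul_le_mul hb2 (abs_bd2_le s) (abs_nonneg _) (by positivity)
    have e3 : |b3 s * bd3 s| ≤ s * bd3 s * bd3 s := by
      rw [abs_mul]
      exact mul_le_mul hb3 (abs_bd3_le s) (abs_nonneg _) (by positivity)
    have t1 := abs_add_le (b1 s * bd1 s + b2 s * bd2 s) (b3 s * bd3 s)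
    have t2 := abs_add_le (b1 s * bd1 s) (b2 s * bd2 s)
    linarith
  rw [Ader_zero_eq, abs_mul, abs_div, abs_inv, abs_of_pos hg, abs_of_pos hRpos]
  have step1 : |b1 s * bd1 s + b2 s * bd2 s + b3 s * bd3 s| /
      Real.sqrt (1 + (b1 s ^ 2 + b2 s ^ 2 + b3 s ^ 2)) ≤
      |b1 s * bd1 s + b2 s * bd2 s + b3 s * bd3 s| :=
    div_le_self (abs_nonneg _) hR
  have step2 : (bd3 s)⁻¹ * (3 * (s * bd3 s * bd3 s)) = 3 * s * bd3 s := by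
    field_simp
  have hgle := bd3_le_one s
  calc (bd3 s)⁻¹ * (|b1 s * bd1 s + b2 s * bd2 s + b3 s * bd3 s| /
        Real.sqrt (1 + (b1 s ^ 2 + b2 s ^ 2 + b3 s ^ 2)))
      ≤ (bd3 s)⁻¹ * |b1 s * bd1 s + b2 s * bd2 s + b3 s * bd3 s| :=
        mul_le_mul_of_nonneg_left step1 (inv_nonneg.2 hg.le)
    _ ≤ (bd3 s)⁻¹ * (3 * (s * bd3 s * bd3 s)) :=
        mul_le_mul_of_nonneg_left hnum (inv_nonneg.2 hg.le)
    _ = 3 * s * bd3 s := step2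
    _ ≤ 3 * s := by nlinarith

theorem tendsto_Ader {c : ℝ} (hc : 0 ≤ c) :
    Filter.Tendsto (fun n => (bd3 (smp c n))⁻¹ • Ader (smp c n)) Filter.atTop
      (nhds ![0, Real.cos c, -Real.sin c, 1]) := by
  rw [tendsto_pi_nhds]
  intro i
  fin_cases i
  · show Filter.Tendsto (fun n => ((bd3 (smp c n))⁻¹ • Ader (smp c n)) 0) Filter.atTop (nhds 0)
    have hmaj : Filter.Tendsto (fun n : ℕ => 3 * smp c n) Filter.atTop (nhds 0) := by
      have h := Filter.Tendsto.const_mul (3:ℝ) (smp_tendsto (c := c))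
      rw [mul_zero] at h
      exact h
    apply squeeze_zero_norm _ hmaj
    intro n
    have h := Ader0_bound (smp_pos hc n)
    rw [abs_mul, abs_inv] at h
    simpa [Pi.smul_apply, smul_eq_mul, abs_mul, abs_inv] using h
  · show Filter.Tendsto (fun n => ((bd3 (smp c n))⁻¹ • Ader (smp c n)) 1) Filter.atTop
      (nhds (Real.cos c))
    have he : ∀ n, ((bd3 (smp c n))⁻¹ • Ader (smp c n)) 1 = Real.cos c := by
      intro n
      have h1 : Ader (smp c n) 1 = bd1 (smp c n) := rfl
      rw [Pi.smul_apply, smul_eq_mul, h1, bd1_sample hc]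
      field_simp [(bd3_pos (smp_pos hc n)).ne']
    exact Filter.Tendsto.congr (fun n => (he n).symm) tendsto_const_nhds
  · show Filter.Tendsto (fun n => ((bd3 (smp c n))⁻¹ • Ader (smp c n)) 2) Filter.atTop
      (nhds (-Real.sin c))
    have he : ∀ n, ((bd3 (smp c n))⁻¹ • Ader (smp c n)) 2 = -Real.sin c := by
      intro n
      have h1 : Ader (smp c n) 2 = bd2 (smp c n) := rfl
      rw [Pi.smul_apply, smul_eq_mul, h1, bd2_sample hc]
      field_simp [(bd3_pos (smp_pos hc n)).ne']
    exact Filter.Tendsto.congr (fun n => (he n).symm) tendsto_const_nhds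
  · show Filter.Tendsto (fun n => ((bd3 (smp c n))⁻¹ • Ader (smp c n)) 3) Filter.atTop
      (nhds 1)
    have he : ∀ n, ((bd3 (smp c n))⁻¹ • Ader (smp c n)) 3 = 1 := by
      intro n
      have h1 : Ader (smp c n) 3 = bd3 (smp c n) := rfl
      rw [Pi.smul_apply, smul_eq_mul, h1]
      field_simp [(bd3_pos (smp_pos hc n)).ne']
    exact Filter.Tendsto.congr (fun n => (he n).symm) tendsto_const_nhds

theorem mink_limit_zero {Z : ℝ → Fin 4 → ℝ} (hZ : Continuous Z)
    (hA : ∀ s : ℝ, mink (Ader s) (Z s) = 0) {c : ℝ} (hc : 0 ≤ c) :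
    mink ![0, Real.cos c, -Real.sin c, 1] (Z 0) = 0 := by
  have h1 : Filter.Tendsto (fun n => mink ((bd3 (smp c n))⁻¹ • Ader (smp c n)) (Z (smp c n)))
      Filter.atTop (nhds (mink ![0, Real.cos c, -Real.sin c, 1] (Z 0))) :=
    tendsto_mink (tendsto_Ader hc) ((hZ.tendsto 0).comp smp_tendsto)
  have h2 : ∀ n, mink ((bd3 (smp c n))⁻¹ • Ader (smp c n)) (Z (smp c n)) = 0 := by
    intro n
    rw [mink_smul_left, hA, mul_zero]
  exact tendsto_nhds_unique h1 (Filter.Tendsto.congr (fun n => (h2 n).symm) tendsto_const_nhds)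

theorem Tc_zero : Tc 0 = ![1, 0, 0, 0] := by
  have hb : b1 0 = 0 ∧ b2 0 = 0 ∧ b3 0 = 0 := by
    refine ⟨?_, ?_, ?_⟩ <;> simp [b1, b2, b3, prim, intervalIntegral.integral_same]
  simp [Tc, hb.1, hb.2.1, hb.2.2]


/-- there is a time-like curve parametrized by proper time that does not
admit a generalized Bishop frame of type C. -/
theorem stmt_4 :
    ∃ (I : Set ℝ) (γ : ℝ → Fin 4 → ℝ), IsOpen I ∧ I.OrdConnected ∧ I.Nonempty ∧
      ProperTime I γ ∧ ¬ AdmitsC I γ := by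
  refine ⟨Set.univ, gam, isOpen_univ, Set.ordConnected_univ, ⟨0, Set.mem_univ 0⟩,
    ⟨gam_contDiff.contDiffOn, fun s _ => by rw [gam_deriv]; exact mink_Tc s⟩, ?_⟩
  rintro ⟨Z₁, Z₂, Z₃, x₁, x₂, x₃, ⟨hZ1, hZ2, hZ3, horth⟩, -, heqs⟩
  have hZcont : Continuous Z₃ := by
    exact continuousOn_univ.1 hZ3.continuousOn
  have hA : ∀ s : ℝ, mink (Ader s) (Z₃ s) = 0 := by
    intro s
    have h := (heqs s (Set.mem_univ s)).1
    have hd : deriv (deriv gam) = Ader := by rw [gam_deriv, Tc_deriv]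
    rw [hd] at h
    have ho := horth s (Set.mem_univ s)
    rw [h, mink_smul_add, ho.2.2.2.2.1, ho.2.2.2.2.2.1]
    ring
  have h0 : mink (Tc 0) (Z₃ 0) = 0 := by
    have h := (horth 0 (Set.mem_univ 0)).2.2.2.2.2.2.2.2
    rwa [gam_deriv] at h
  have hznorm : mink (Z₃ 0) (Z₃ 0) = 1 := (horth 0 (Set.mem_univ 0)).2.2.1
  have hu1 := mink_limit_zero hZcont hA (le_refl 0)
  have hu2 := mink_limit_zero hZcont hA (c := π/2) (by positivity)
  have hu3 := mink_limit_zero hZcont hA (c := π) Real.pi_pos.le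
  rw [Tc_zero] at h0
  simp only [mink, Matrix.cons_val_zero, Matrix.cons_val_one, Matrix.head_cons,
    Matrix.cons_val_two, Matrix.tail_cons, Matrix.cons_val_three, Real.cos_zero, Real.sin_zero,
    Real.cos_pi_div_two, Real.sin_pi_div_two, Real.cos_pi, Real.sin_pi] at h0 hu1 hu2 hu3
  rw [mink] at hznorm
  have hz0 : Z₃ 0 0 = 0 := by linarith
  have hz1 : Z₃ 0 1 = 0 := by linarith
  have hz3 : Z₃ 0 3 = 0 := by linarith
  have hz2 : Z₃ 0 2 = 0 := by linarith
  rw [hz0, hz1, hz2, hz3] at hznorm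
  norm_num at hznorm
end
end

section
/- There exist an open interval I ⊆ ℝ and a 2-regular time-like curve γ : I → 𝕃⁴ parametrized by proper time that does not admit a generalized Bishop frame of type F. -/
open Set Real

noncomputable section

namespace S6
def Tv : ℝ → Fin 4 → ℝ := fun s =>
  ![Real.sqrt (1 + s^2 + expNegInvGlue s ^ 2 + expNegInvGlue (-s) ^ 2), s,
    expNegInvGlue s, expNegInvGlue (-s)]

lemma hq (s : ℝ) : 0 < 1 + s^2 + expNegInvGlue s ^ 2 + expNegInvGlue (-s) ^ 2 := by positivity

lemma Tv_smooth : ContDiff ℝ (⊤:ℕ∞) Tv := by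
  apply contDiff_pi.mpr
  intro i
  fin_cases i
  · exact ContDiff.sqrt (by
      exact ((contDiff_const.add (contDiff_id.pow 2)).add (expNegInvGlue.contDiff.pow 2)).add
        ((expNegInvGlue.contDiff.comp contDiff_neg).pow 2)) (fun s => (hq s).ne')
  · exact contDiff_id
  · exact expNegInvGlue.contDiff
  · exact expNegInvGlue.contDiff.comp contDiff_neg

def γc : ℝ → Fin 4 → ℝ := fun s i => ∫ t in (0:ℝ)..s, Tv t i

lemma γc_hasDeriv (s : ℝ) : HasDerivAt γc (Tv s) s := by
  apply hasDerivAt_pi.mpr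
  intro i
  exact (((continuous_apply i).comp Tv_smooth.continuous).integral_hasStrictDerivAt 0 s).hasDerivAt

lemma γc_deriv : deriv γc = Tv := funext fun s => (γc_hasDeriv s).deriv

lemma γc_smooth : ContDiff ℝ (⊤:ℕ∞) γc := by
  exact contDiff_infty_iff_deriv.mpr ⟨fun s => (γc_hasDeriv s).differentiableAt,
    γc_deriv ▸ Tv_smooth⟩

lemma Tv_diff : Differentiable ℝ Tv := Tv_smooth.differentiable (by simp)

lemma derivTv_smooth : ContDiff ℝ (⊤:ℕ∞) (deriv Tv) := (contDiff_infty_iff_deriv.mp Tv_smooth).2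

lemma derivTv_diff : Differentiable ℝ (deriv Tv) := derivTv_smooth.differentiable (by simp)

lemma deriv_coord (F : ℝ → Fin 4 → ℝ) {s : ℝ} (hF : DifferentiableAt ℝ F s) (i : Fin 4) :
    deriv F s i = deriv (fun t => F t i) s :=
  (hasDerivAt_pi.mp hF.hasDerivAt i).deriv.symm

lemma dT1 (s : ℝ) : deriv Tv s 1 = 1 := by
  rw [deriv_coord Tv (Tv_diff s) 1]
  have : (fun t => Tv t 1) = fun t => t := by funext t; simp [Tv]
  rw [this, deriv_id'']

lemma d2T1 (s : ℝ) : deriv (deriv Tv) s 1 = 0 := by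
  rw [deriv_coord (deriv Tv) (derivTv_diff s) 1]
  have : (fun t => deriv Tv t 1) = fun _ => (1:ℝ) := funext dT1
  rw [this, deriv_const]

lemma minkTT (s : ℝ) : -(Tv s 0 * Tv s 0) + Tv s 1 * Tv s 1 + Tv s 2 * Tv s 2 + Tv s 3 * Tv s 3 = -1 := by
  simp only [Tv, Matrix.cons_val_zero, Matrix.cons_val_one, Matrix.head_cons,
    Matrix.cons_val_two, Matrix.tail_cons, Matrix.cons_val_three]
  nlinarith [Real.mul_self_sqrt (hq s).le]

-- right side (s > 0) coordinate facts
lemma Tv2_pos {s : ℝ} (hs : 0 < s) : Tv s 2 = exp (-s⁻¹) := by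
  simp [Tv, expNegInvGlue, not_le.2 hs]

lemma Tv3_pos {s : ℝ} (hs : 0 < s) : Tv s 3 = 0 := by
  have h : Tv s 3 = expNegInvGlue (-s) := by simp [Tv]
  rw [h]; exact expNegInvGlue.zero_of_nonpos (by linarith)

lemma F_hasDeriv {s : ℝ} (hs : 0 < s) :
    HasDerivAt (fun t : ℝ => exp (-t⁻¹)) (exp (-s⁻¹) * (s^2)⁻¹) s := by
  have h0 : HasDerivAt (fun t : ℝ => -t⁻¹) ((s^2)⁻¹) s := by
    exact (hasDerivAt_inv hs.ne').neg.congr_deriv (by ring)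
  exact h0.exp

lemma dT2_pos {s : ℝ} (hs : 0 < s) : deriv Tv s 2 = exp (-s⁻¹) / s^2 := by
  rw [div_eq_mul_inv]
  rw [deriv_coord Tv (Tv_diff s) 2]
  have he : (fun t => Tv t 2) =ᶠ[nhds s] fun t => exp (-t⁻¹) := by
    filter_upwards [Ioi_mem_nhds hs] with t ht
    exact Tv2_pos ht
  rw [he.deriv_eq]; exact (F_hasDeriv hs).deriv

lemma F'_hasDeriv {s : ℝ} (hs : 0 < s) :
    HasDerivAt (fun t : ℝ => exp (-t⁻¹) * (t^2)⁻¹)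
      (exp (-s⁻¹) * (s^2)⁻¹ * (s^2)⁻¹ + exp (-s⁻¹) * (-(2*s)/((s^2)^2))) s := by
  have h2 : HasDerivAt (fun t : ℝ => (t^2)⁻¹) (-(2*s)/((s^2)^2)) s := by
    have := (hasDerivAt_pow 2 s).inv (pow_ne_zero 2 hs.ne')
    exact this.congr_deriv (by norm_num)
  exact (F_hasDeriv hs).mul h2

lemma d2T2_pos {s : ℝ} (hs : 0 < s) :
    deriv (deriv Tv) s 2 = exp (-s⁻¹) * (1 - 2*s) / s^4 := by
  rw [deriv_coord (deriv Tv) (derivTv_diff s) 2]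
  have he : (fun t => deriv Tv t 2) =ᶠ[nhds s] fun t => exp (-t⁻¹) * (t^2)⁻¹ := by
    filter_upwards [Ioi_mem_nhds hs] with t ht
    rw [dT2_pos ht, div_eq_mul_inv]
  rw [he.deriv_eq, (F'_hasDeriv hs).deriv]
  field_simp
  ring

lemma dT3_pos {s : ℝ} (hs : 0 < s) : deriv Tv s 3 = 0 := by
  rw [deriv_coord Tv (Tv_diff s) 3]
  have he : (fun t => Tv t 3) =ᶠ[nhds s] fun _ => (0:ℝ) := by
    filter_upwards [Ioi_mem_nhds hs] with t ht
    exact Tv3_pos ht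
  rw [he.deriv_eq, deriv_const]

lemma d2T3_pos {s : ℝ} (hs : 0 < s) : deriv (deriv Tv) s 3 = 0 := by
  rw [deriv_coord (deriv Tv) (derivTv_diff s) 3]
  have he : (fun t => deriv Tv t 3) =ᶠ[nhds s] fun _ => (0:ℝ) := by
    filter_upwards [Ioi_mem_nhds hs] with t ht
    exact dT3_pos ht
  rw [he.deriv_eq, deriv_const]

-- left side (s < 0) coordinate facts
lemma Tv3_neg {s : ℝ} (hs : s < 0) : Tv s 3 = exp (s⁻¹) := by
  have h : ¬ (-s ≤ 0) := by linarith
  simp [Tv, expNegInvGlue, h, inv_neg]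

lemma Tv2_neg {s : ℝ} (hs : s < 0) : Tv s 2 = 0 := by
  have h : Tv s 2 = expNegInvGlue s := by simp [Tv]
  rw [h]; exact expNegInvGlue.zero_of_nonpos hs.le

lemma G_hasDeriv {s : ℝ} (hs : s < 0) :
    HasDerivAt (fun t : ℝ => exp (t⁻¹)) (exp (s⁻¹) * (-(s^2)⁻¹)) s :=
  (hasDerivAt_inv hs.ne).exp

lemma dT3_neg {s : ℝ} (hs : s < 0) : deriv Tv s 3 = -(exp (s⁻¹) / s^2) := by
  rw [div_eq_mul_inv, ← mul_neg]
  rw [deriv_coord Tv (Tv_diff s) 3]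
  have he : (fun t => Tv t 3) =ᶠ[nhds s] fun t => exp (t⁻¹) := by
    filter_upwards [Iio_mem_nhds hs] with t ht
    exact Tv3_neg ht
  rw [he.deriv_eq]; exact (G_hasDeriv hs).deriv

lemma G'_hasDeriv {s : ℝ} (hs : s < 0) :
    HasDerivAt (fun t : ℝ => exp (t⁻¹) * (-(t^2)⁻¹))
      (exp (s⁻¹) * (-(s^2)⁻¹) * (-(s^2)⁻¹) + exp (s⁻¹) * ((2*s)/((s^2)^2))) s := by
  have h2 : HasDerivAt (fun t : ℝ => -(t^2)⁻¹) ((2*s)/((s^2)^2)) s := by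
    have := ((hasDerivAt_pow 2 s).inv (pow_ne_zero 2 hs.ne)).neg
    exact this.congr_deriv (by norm_num [neg_div])
  exact (G_hasDeriv hs).mul h2

lemma d2T3_neg {s : ℝ} (hs : s < 0) :
    deriv (deriv Tv) s 3 = exp (s⁻¹) * (1 + 2*s) / s^4 := by
  rw [deriv_coord (deriv Tv) (derivTv_diff s) 3]
  have he : (fun t => deriv Tv t 3) =ᶠ[nhds s] fun t => exp (t⁻¹) * (-(t^2)⁻¹) := by
    filter_upwards [Iio_mem_nhds hs] with t ht
    rw [dT3_neg ht, div_eq_mul_inv, ← mul_neg]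
  rw [he.deriv_eq, (G'_hasDeriv hs).deriv]
  have : s ≠ 0 := hs.ne
  field_simp

lemma dT2_neg {s : ℝ} (hs : s < 0) : deriv Tv s 2 = 0 := by
  rw [deriv_coord Tv (Tv_diff s) 2]
  have he : (fun t => Tv t 2) =ᶠ[nhds s] fun _ => (0:ℝ) := by
    filter_upwards [Iio_mem_nhds hs] with t ht
    exact Tv2_neg ht
  rw [he.deriv_eq, deriv_const]

lemma d2T2_neg {s : ℝ} (hs : s < 0) : deriv (deriv Tv) s 2 = 0 := by
  rw [deriv_coord (deriv Tv) (derivTv_diff s) 2]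
  have he : (fun t => deriv Tv t 2) =ᶠ[nhds s] fun _ => (0:ℝ) := by
    filter_upwards [Iio_mem_nhds hs] with t ht
    exact dT2_neg ht
  rw [he.deriv_eq, deriv_const]

lemma Tv1 (s : ℝ) : Tv s 1 = s := by simp [Tv]

lemma Tv00 : Tv 0 0 = 1 := by
  simp [Tv, expNegInvGlue.zero]

lemma Tv01 : Tv 0 1 = 0 := by simp [Tv]
lemma Tv02 : Tv 0 2 = 0 := by simp [Tv, expNegInvGlue.zero]
lemma Tv03 : Tv 0 3 = 0 := by simp [Tv, expNegInvGlue.zero]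
end S6

/-- there is a 2-regular time-like curve parametrized by proper time that
does not admit a generalized Bishop frame of type F. -/
theorem stmt_6 :
    ∃ (I : Set ℝ) (γ : ℝ → Fin 4 → ℝ), IsOpen I ∧ I.OrdConnected ∧ I.Nonempty ∧
      ProperTime I γ ∧ (∀ s ∈ I, deriv (deriv γ) s ≠ 0) ∧ ¬ AdmitsF I γ := by
  classical
  refine ⟨Set.univ, S6.γc, isOpen_univ, Set.ordConnected_univ, Set.univ_nonempty, ?_, ?_, ?_⟩
  · refine ⟨contDiffOn_univ.mpr S6.γc_smooth, fun s _ => ?_⟩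
    rw [S6.γc_deriv]
    show mink (S6.Tv s) (S6.Tv s) = -1
    unfold mink
    exact S6.minkTT s
  · intro s _ h
    rw [S6.γc_deriv] at h
    have h1 := congrFun h 1
    rw [S6.dT1 s] at h1
    simpa using h1
  · rintro ⟨Z₁, Z₂, Z₃, x₁, x₂, x₃, ⟨hZ₁s, hZ₂s, hZ₃s, horth⟩, ⟨hx₁s, hx₂s, hx₃s⟩, heq⟩
    rw [S6.γc_deriv] at horth heq
    have hx₁ne : ∀ s : ℝ, x₁ s ≠ 0 := by
      intro s h0
      have e1 := (heq s (Set.mem_univ s)).1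
      rw [h0, zero_smul] at e1
      have h1 := congrFun e1 1
      rw [S6.dT1 s] at h1
      simpa using h1
    have hZ₁eq : Z₁ = fun t => (x₁ t)⁻¹ • deriv S6.Tv t := by
      funext t
      have e1 := (heq t (Set.mem_univ t)).1
      rw [e1, smul_smul, inv_mul_cancel₀ (hx₁ne t), one_smul]
    have hx₁diff : Differentiable ℝ x₁ :=
      (contDiffOn_univ.mp hx₁s).differentiable (by simp)
    have hZ₁d : ∀ s : ℝ, deriv Z₁ s =
        (x₁ s)⁻¹ • deriv (deriv S6.Tv) s + (deriv (fun t => (x₁ t)⁻¹) s) • deriv S6.Tv s := by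
      intro s
      have hu : HasDerivAt (fun t => (x₁ t)⁻¹) (deriv (fun t => (x₁ t)⁻¹) s) s :=
        ((hx₁diff s).inv (hx₁ne s)).hasDerivAt
      have hvt : HasDerivAt (deriv S6.Tv) (deriv (deriv S6.Tv) s) s :=
        (S6.derivTv_diff s).hasDerivAt
      rw [hZ₁eq]
      exact (hu.smul hvt).deriv
    have hVeq : ∀ s : ℝ, x₂ s • Z₂ s =
        (x₁ s)⁻¹ • deriv (deriv S6.Tv) s + (deriv (fun t => (x₁ t)⁻¹) s) • deriv S6.Tv s
          - x₁ s • S6.Tv s := by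
      intro s
      have e2 := (heq s (Set.mem_univ s)).2.1
      rw [hZ₁d s] at e2
      rw [e2]; abel
    have hR : ∀ s : ℝ, 0 < s → s < 1/2 → Z₂ s 3 = 0 := by
      intro s hs0 hs2
      have hV1 := congrFun (hVeq s) 1
      have hV2 := congrFun (hVeq s) 2
      have hV3 := congrFun (hVeq s) 3
      simp only [Pi.add_apply, Pi.sub_apply, Pi.smul_apply, smul_eq_mul] at hV1 hV2 hV3
      rw [S6.dT1 s, S6.d2T1 s, S6.Tv1 s] at hV1
      rw [S6.dT2_pos hs0, S6.d2T2_pos hs0, S6.Tv2_pos hs0] at hV2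
      rw [S6.dT3_pos hs0, S6.d2T3_pos hs0, S6.Tv3_pos hs0] at hV3
      have hx2 : x₂ s ≠ 0 := by
        intro h0
        rw [h0, zero_mul] at hV1 hV2
        have hc : deriv (fun t => (x₁ t)⁻¹) s = x₁ s * s := by linarith
        rw [hc] at hV2
        have hE := Real.exp_pos (-s⁻¹)
        have hx1 := hx₁ne s
        have hx1sq : 0 < x₁ s ^ 2 := by positivity
        have hxi : x₁ s * (x₁ s)⁻¹ = 1 := mul_inv_cancel₀ hx1
        have hs1 : s * s⁻¹ = 1 := mul_inv_cancel₀ hs0.ne'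
        have key : (0:ℝ) = rexp (-s⁻¹) * (1-2*s)/s^4 + x₁ s^2 * (rexp (-s⁻¹)/s)
            - x₁ s^2 * rexp (-s⁻¹) := by
          linear_combination (x₁ s) * hV2 + (rexp (-s⁻¹)*(1-2*s)/s^4) * hxi
            + (x₁ s^2 * rexp (-s⁻¹) * s⁻¹) * hs1
        have hC : rexp (-s⁻¹) < rexp (-s⁻¹)/s := by
          rw [lt_div_iff₀ hs0]; nlinarith
        have t1pos : 0 < rexp (-s⁻¹) * (1-2*s)/s^4 :=
          div_pos (mul_pos hE (by linarith)) (by positivity)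
        nlinarith [key, hC, t1pos, hx1sq, mul_lt_mul_of_pos_left hC hx1sq]
      have hz : x₂ s * Z₂ s 3 = 0 := by rw [hV3]; ring
      exact (mul_eq_zero.mp hz).resolve_left hx2
    have hL : ∀ s : ℝ, -(1/2) < s → s < 0 → Z₂ s 2 = 0 := by
      intro s hs0 hs2
      have hV1 := congrFun (hVeq s) 1
      have hV2 := congrFun (hVeq s) 2
      have hV3 := congrFun (hVeq s) 3
      simp only [Pi.add_apply, Pi.sub_apply, Pi.smul_apply, smul_eq_mul] at hV1 hV2 hV3
      rw [S6.dT1 s, S6.d2T1 s, S6.Tv1 s] at hV1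
      rw [S6.dT2_neg hs2, S6.d2T2_neg hs2, S6.Tv2_neg hs2] at hV2
      rw [S6.dT3_neg hs2, S6.d2T3_neg hs2, S6.Tv3_neg hs2] at hV3
      have hx2 : x₂ s ≠ 0 := by
        intro h0
        rw [h0, zero_mul] at hV1 hV3
        have hc : deriv (fun t => (x₁ t)⁻¹) s = x₁ s * s := by linarith
        rw [hc] at hV3
        have hE := Real.exp_pos (s⁻¹)
        have hx1 := hx₁ne s
        have hx1sq : 0 < x₁ s ^ 2 := by positivity
        have hxi : x₁ s * (x₁ s)⁻¹ = 1 := mul_inv_cancel₀ hx1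
        have hs1 : s * s⁻¹ = 1 := mul_inv_cancel₀ hs2.ne
        have key : (0:ℝ) = rexp (s⁻¹) * (1+2*s)/s^4 - x₁ s^2 * (rexp (s⁻¹)/s)
            - x₁ s^2 * rexp (s⁻¹) := by
          linear_combination (x₁ s) * hV3 + (rexp (s⁻¹)*(1+2*s)/s^4) * hxi
            + (-(x₁ s^2 * rexp (s⁻¹) * s⁻¹)) * hs1
        have hC : rexp (s⁻¹)/s < -rexp (s⁻¹) := by
          rw [div_lt_iff_of_neg hs2]; nlinarith [Real.exp_pos (s⁻¹)]
        have hs4 : (0:ℝ) < s^4 := by nlinarith [sq_pos_of_ne_zero hs2.ne]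
        have t1pos : 0 < rexp (s⁻¹) * (1+2*s)/s^4 :=
          div_pos (mul_pos hE (by linarith)) hs4
        nlinarith [key, hC, t1pos, hx1sq, mul_lt_mul_of_pos_left hC hx1sq]
      have hz : x₂ s * Z₂ s 2 = 0 := by rw [hV2]; ring
      exact (mul_eq_zero.mp hz).resolve_left hx2
    have hZ₂c : Continuous Z₂ := (contDiffOn_univ.mp hZ₂s).continuous
    have hZ03 : Z₂ 0 3 = 0 := by
      have h3c : Continuous fun t => Z₂ t 3 := (continuous_apply 3).comp hZ₂c
      have hsub : closure (Ioo (0:ℝ) (1/4)) ⊆ {t | Z₂ t 3 = 0} := by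
        apply closure_minimal
        · intro t ht
          exact hR t ht.1 (ht.2.trans (by norm_num))
        · exact isClosed_eq h3c continuous_const
      have h0 : (0:ℝ) ∈ closure (Ioo (0:ℝ) (1/4)) := by
        rw [closure_Ioo (by norm_num : (0:ℝ) ≠ 1/4)]
        exact ⟨le_refl 0, by norm_num⟩
      exact hsub h0
    have hZ02 : Z₂ 0 2 = 0 := by
      have h2c : Continuous fun t => Z₂ t 2 := (continuous_apply 2).comp hZ₂c
      have hsub : closure (Ioo (-(1/4):ℝ) 0) ⊆ {t | Z₂ t 2 = 0} := by
        apply closure_minimal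
        · intro t ht
          exact hL t (by linarith [ht.1]) ht.2
        · exact isClosed_eq h2c continuous_const
      have h0 : (0:ℝ) ∈ closure (Ioo (-(1/4):ℝ) 0) := by
        rw [closure_Ioo (by norm_num : (-(1/4):ℝ) ≠ 0)]
        exact ⟨by norm_num, le_refl 0⟩
      exact hsub h0
    obtain ⟨_, hZ₂Z₂, _, hZ₁Z₂, _, _, _, hTZ₂, _⟩ := horth 0 (Set.mem_univ 0)
    have hZ00 : Z₂ 0 0 = 0 := by
      unfold mink at hTZ₂
      rw [S6.Tv00, S6.Tv01, S6.Tv02, S6.Tv03, hZ02, hZ03] at hTZ₂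
      linarith
    have hZ01 : Z₂ 0 1 = 0 := by
      rw [hZ₁eq] at hZ₁Z₂
      simp only [mink, Pi.smul_apply, smul_eq_mul] at hZ₁Z₂
      rw [S6.dT1 0, hZ00, hZ02, hZ03] at hZ₁Z₂
      have hu : (x₁ 0)⁻¹ ≠ 0 := inv_ne_zero (hx₁ne 0)
      have : (x₁ 0)⁻¹ * Z₂ 0 1 = 0 := by linarith
      exact (mul_eq_zero.mp this).resolve_left hu
    unfold mink at hZ₂Z₂
    rw [hZ00, hZ01, hZ02, hZ03] at hZ₂Z₂
    norm_num at hZ₂Z₂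
end
end
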